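/- Let J ⊆ ℕ be a finite set, let r ≥ 1 be an integer with r ∈ J and r − 1 ∉ J, and let y = ∏_{j∈J} X (j+1) ∈ B. Then (π_{2^r − 1} ⊗ id)(ψ_B(y)) = 0. (This shows 2^r − 1 ∉ S(y) for the top class y of H_*(Bβ_{2k}; 𝔽₂), where k = Σ_{j∈J} 2^j.) -/

import Mathlib

open MvPolynomial TensorProduct

/-- The field 𝔽₂. -/
abbrev F2 : Type := ZMod 2

/-- The polynomial ring `𝔽₂[X 0, X 1, X 2, …]`, used as a model both for
`H_*(∐ₖ Ratₖ; 𝔽₂) = 𝔽₂[g, g⁻¹Qg, Q(g⁻¹Qg), …]` (the "R" model, where `X 0 = g` and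
`X (i+1) = Qⁱ(g⁻¹Qg)`) and for `H_*(∐ₙ Bβₙ; 𝔽₂) = 𝔽₂[g, Qg, Q²g, …]`
(the "B" model, where `X i = Qⁱg`). -/
abbrev P : Type := MvPolynomial ℕ F2

/-- Weight of the variable `X i` in the braid model `B`: `wt(Qⁱg) = 2^i`. -/
def wB : ℕ → ℕ := fun i => 2 ^ i

/-- Dimension of the variable `X i` in the braid model `B`: `dim(Qⁱg) = 2^i - 1`. -/
def dB : ℕ → ℕ := fun i => 2 ^ i - 1

/-- Weight of the variable `X i` in the Rat model `R`: `wt(g) = 1`,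
`wt(Qⁱ(g⁻¹Qg)) = 2^i`. -/
def wR : ℕ → ℕ := fun i => match i with
  | 0 => 1
  | j + 1 => 2 ^ j

/-- Dimension of the variable `X i` in the Rat model `R`: `dim(g) = 0`,
`dim(Qⁱ(g⁻¹Qg)) = 2^(i+1) - 1`. -/
def dR : ℕ → ℕ := fun i => match i with
  | 0 => 0
  | j + 1 => 2 ^ (j + 1) - 1

/-- The weight (resp. dimension) of a monomial with exponent vector `m`: the sum,
with multiplicity, of the weights (resp. dimensions) `w i` of its variables. -/
def mwt (w : ℕ → ℕ) (m : ℕ →₀ ℕ) : ℕ := m.sum fun i e => e * w i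

/-- A polynomial is homogeneous of weight (resp. dimension) `n` with respect to the
variable-weight function `w` if every monomial in its support has weight
(resp. dimension) `n`. -/
def Homog (w : ℕ → ℕ) (n : ℕ) (x : P) : Prop := ∀ m ∈ x.support, mwt w m = n

/-- The 𝔽₂-linear span of the monomials of weight `n`. -/
noncomputable def spanWt (w : ℕ → ℕ) (n : ℕ) : Submodule F2 P :=
  Submodule.span F2 {p : P | ∃ m : ℕ →₀ ℕ, mwt w m = n ∧ p = monomial m 1}

/-- The image `N ⊗ M` inside `P ⊗ P` of two submodules `N, M ⊆ P`. -/
noncomputable def tensorSub (N M : Submodule F2 P) : Submodule F2 (P ⊗[F2] P) :=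
  Submodule.span F2 {t : P ⊗[F2] P | ∃ a ∈ N, ∃ b ∈ M, t = a ⊗ₜ[F2] b}

/-- `Q` is the Araki–Kudo operation on the Rat model: the 𝔽₂-linear map with
`Q(X 0) = X 0 · X 1`, `Q(X (i+1)) = X (i+2)`, and the Cartan formula
`Q(uv) = u²Q(v) + Q(u)v²`. -/
def IsQ (Q : P →ₗ[F2] P) : Prop :=
  Q (X 0) = X 0 * X 1 ∧ (∀ i : ℕ, Q (X (i + 1)) = X (i + 2)) ∧
    ∀ u v : P, Q (u * v) = u ^ 2 * Q v + Q u * v ^ 2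

/-- `ψ` is the coproduct on the braid model `B`: the 𝔽₂-algebra map with
`ψ(g) = g ⊗ g` and `ψ(Qⁱg) = g^(2^i) ⊗ Qⁱg + Qⁱg ⊗ g^(2^i)` for `i ≥ 1`. -/
def IsPsiB (ψ : P →ₐ[F2] P ⊗[F2] P) : Prop :=
  ψ (X 0) = X 0 ⊗ₜ[F2] X 0 ∧
    ∀ i : ℕ, 1 ≤ i →
      ψ (X i) = ((X 0) ^ (2 ^ i)) ⊗ₜ[F2] (X i) + (X i) ⊗ₜ[F2] ((X 0) ^ (2 ^ i))

/-- `ψ` is the coproduct on the Rat model `R` (with Araki–Kudo operation `Q`):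
the 𝔽₂-algebra map with `ψ(g) = g ⊗ g`, `ψ(g⁻¹Qg) = g ⊗ g⁻¹Qg + g⁻¹Qg ⊗ g`, and
`ψ(Qⁱ(g⁻¹Qg)) = g^(2^i) ⊗ Qⁱ(g⁻¹Qg) + Qⁱg ⊗ (g⁻¹Qg)^(2^i) + (g⁻¹Qg)^(2^i) ⊗ Qⁱg
+ Qⁱ(g⁻¹Qg) ⊗ g^(2^i)` for `i ≥ 1`, where `Qⁱg = Qⁱ(X 0)`. -/
def IsPsiR (Q : P →ₗ[F2] P) (ψ : P →ₐ[F2] P ⊗[F2] P) : Prop :=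
  ψ (X 0) = X 0 ⊗ₜ[F2] X 0 ∧
  ψ (X 1) = X 0 ⊗ₜ[F2] X 1 + X 1 ⊗ₜ[F2] X 0 ∧
  ∀ i : ℕ, 1 ≤ i →
    ψ (X (i + 1)) =
      ((X 0) ^ (2 ^ i)) ⊗ₜ[F2] (X (i + 1))
      + ((⇑Q)^[i] (X 0)) ⊗ₜ[F2] ((X 1) ^ (2 ^ i))
      + ((X 1) ^ (2 ^ i)) ⊗ₜ[F2] ((⇑Q)^[i] (X 0))
      + (X (i + 1)) ⊗ₜ[F2] ((X 0) ^ (2 ^ i))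

/-- `π` is the family of projections: `π s` is the 𝔽₂-linear endomorphism fixing
every monomial of dimension `s` (with respect to the variable-dimension function
`dimv`) and annihilating every monomial of other dimensions. -/
def IsPi (dimv : ℕ → ℕ) (π : ℕ → P →ₗ[F2] P) : Prop :=
  ∀ (s : ℕ) (m : ℕ →₀ ℕ) (c : F2),
    π s (monomial m c) = if mwt dimv m = s then monomial m c else 0


section Aux

/-- Arithmetic core: no subset `K ⊆ J` has `∑_{j∈K} (2^{j+1} − 1) = 2^r − 1`. -/
lemma key_arith (J : Finset ℕ) (r : ℕ) (hr : 1 ≤ r) (hrpred : r - 1 ∉ J)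
    (K : Finset ℕ) (hK : K ⊆ J) : ∑ j ∈ K, (2 ^ (j + 1) - 1) ≠ 2 ^ r - 1 := by
  intro h
  have h2r : 2 ≤ 2 ^ r := by
    calc 2 = 2 ^ 1 := rfl
    _ ≤ 2 ^ r := Nat.pow_le_pow_right (by norm_num) hr
  rcases K.eq_empty_or_nonempty with rfl | hne
  · simp at h; omega
  · rcases eq_or_lt_of_le (Finset.one_le_card.mpr hne) with h1 | h2
    · obtain ⟨j, rfl⟩ := Finset.card_eq_one.mp h1.symm
      simp at h
      have hj1 : 1 ≤ 2 ^ (j + 1) := Nat.one_le_two_pow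
      have : (2:ℕ) ^ (j + 1) = 2 ^ r := by omega
      have : j + 1 = r := Nat.pow_right_injective (le_refl 2) this
      exact hrpred (by simpa [← this] using hK (Finset.mem_singleton_self j))
    · set M := K.max' hne with hM
      have hMK : M ∈ K := K.max'_mem hne
      have hcard : 1 ≤ (K.erase M).card := by
        have := Finset.card_erase_of_mem hMK; omega
      obtain ⟨j', hj'⟩ := Finset.card_pos.mp hcard
      have hlow1 : 2 ^ (j' + 1) - 1 ≤ ∑ j ∈ K.erase M, (2 ^ (j + 1) - 1) :=
        Finset.single_le_sum (f := fun j => 2 ^ (j + 1) - 1) (fun i _ => Nat.zero_le _) hj'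
      have hj'1 : 1 ≤ 2 ^ (j' + 1) := Nat.one_le_two_pow
      have hsplit : (2 ^ (M + 1) - 1) + ∑ j ∈ K.erase M, (2 ^ (j + 1) - 1)
          = ∑ j ∈ K, (2 ^ (j + 1) - 1) := Finset.add_sum_erase K (fun j => 2 ^ (j + 1) - 1) hMK
      have hM1 : 1 ≤ 2 ^ (M + 1) := Nat.one_le_two_pow
      have hlow : 2 ^ (M + 1) ≤ 2 ^ r - 1 := by omega
      have hMr : M + 1 < r := by
        by_contra hc
        have : 2 ^ r ≤ 2 ^ (M + 1) := Nat.pow_le_pow_right (by norm_num) (by omega)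
        omega
      have hpow : 2 ^ (M + 2) ≤ 2 ^ r := Nat.pow_le_pow_right (by norm_num) (by omega)
      have hsub : K ⊆ Finset.range (M + 1) := fun j hj =>
        Finset.mem_range.mpr (Nat.lt_succ_of_le (K.le_max' j hj))
      have hup1 : ∑ j ∈ K, (2 ^ (j + 1) - 1) ≤ ∑ j ∈ Finset.range (M + 1), (2 ^ (j + 1) - 1) :=
        Finset.sum_le_sum_of_subset hsub
      have hgeom : ∀ n : ℕ, ∑ j ∈ Finset.range n, (2 ^ (j + 1) - 1) + n = 2 ^ (n + 1) - 2 := by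
        intro n
        induction n with
        | zero => simp
        | succ n ih =>
          rw [Finset.sum_range_succ]
          have hp : (2:ℕ) ^ (n + 2) = 2 * 2 ^ (n + 1) := by ring
          have h1 : 1 ≤ 2 ^ (n + 1) := Nat.one_le_two_pow
          omega
      have := hgeom (M + 1)
      have hp2 : (2:ℕ) ^ (M + 2) = 2 * 2 ^ (M + 1) := by ring
      omega

/-- A product of pure tensors is a pure tensor. -/
lemma prod_tmul (s : Finset ℕ) (f g : ℕ → P) :
    ∏ i ∈ s, (f i ⊗ₜ[F2] g i) = (∏ i ∈ s, f i) ⊗ₜ[F2] (∏ i ∈ s, g i) := by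
  classical
  induction s using Finset.induction with
  | empty => simp [Algebra.TensorProduct.one_def]
  | insert _ _ h ih =>
    rw [Finset.prod_insert h, Finset.prod_insert h, Finset.prod_insert h, ih,
      Algebra.TensorProduct.tmul_mul_tmul]

lemma prod_X_eq_monomial (K : Finset ℕ) :
    ∏ j ∈ K, (X (j + 1) : P) = monomial (∑ j ∈ K, Finsupp.single (j + 1) 1) (1 : F2) := by
  classical
  induction K using Finset.induction with
  | empty => simp
  | insert _ _ h ih =>
    rw [Finset.prod_insert h, Finset.sum_insert h, ih, X, monomial_mul, one_mul]

lemma mwt_add (w : ℕ → ℕ) (m n : ℕ →₀ ℕ) : mwt w (m + n) = mwt w m + mwt w n := by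
  unfold mwt
  exact Finsupp.sum_add_index' (fun i => zero_mul _) (fun i b₁ b₂ => add_mul _ _ _)

lemma mwt_single (w : ℕ → ℕ) (i e : ℕ) : mwt w (Finsupp.single i e) = e * w i := by
  unfold mwt
  exact Finsupp.sum_single_index (zero_mul _)

lemma mwt_sum (w : ℕ → ℕ) (K : Finset ℕ) (f : ℕ → ℕ →₀ ℕ) :
    mwt w (∑ j ∈ K, f j) = ∑ j ∈ K, mwt w (f j) := by
  classical
  induction K using Finset.induction with
  | empty => simp [mwt]
  | insert _ _ h ih => rw [Finset.sum_insert h, Finset.sum_insert h, mwt_add, ih]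

end Aux

/-- Let `J ⊆ ℕ` be finite, `r ≥ 1` with `r ∈ J` and `r − 1 ∉ J`,
and `y = ∏_{j∈J} X (j+1) ∈ B`.  Then `(π_{2^r−1} ⊗ id)(ψ_B(y)) = 0`, i.e.
`2^r − 1 ∉ S(y)` for the top class `y` of `H_*(Bβ_{2k}; 𝔽₂)`, `k = Σ_{j∈J} 2^j`. -/
theorem psiB_component_vanishes (J : Finset ℕ) (r : ℕ) (hr : 1 ≤ r)
    (hrJ : r ∈ J) (hrpred : r - 1 ∉ J)
    (ψ : P →ₐ[F2] P ⊗[F2] P) (hψ : IsPsiB ψ)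
    (π : ℕ → P →ₗ[F2] P) (hπ : IsPi dB π)
    (y : P) (hy : y = ∏ j ∈ J, X (j + 1)) :
    TensorProduct.map (π (2 ^ r - 1)) (LinearMap.id : P →ₗ[F2] P) (ψ y) = 0 := by
  classical
  obtain ⟨-, hψi⟩ := hψ
  subst hy
  rw [map_prod]
  rw [Finset.prod_congr rfl (fun j _ => hψi (j + 1) (Nat.succ_le_succ (Nat.zero_le j)))]
  rw [Finset.prod_add, map_sum]
  apply Finset.sum_eq_zero
  intro T hT
  rw [prod_tmul, prod_tmul, Algebra.TensorProduct.tmul_mul_tmul, TensorProduct.map_tmul]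
  have hleft : (∏ j ∈ T, (X 0 : P) ^ 2 ^ (j + 1)) * ∏ j ∈ J \ T, (X (j + 1) : P)
      = monomial (Finsupp.single 0 (∑ j ∈ T, 2 ^ (j + 1))
          + ∑ j ∈ J \ T, Finsupp.single (j + 1) 1) (1 : F2) := by
    rw [Finset.prod_pow_eq_pow_sum, prod_X_eq_monomial, X_pow_eq_monomial, monomial_mul, one_mul]
  rw [hleft, hπ]
  have hdim : mwt dB (Finsupp.single 0 (∑ j ∈ T, 2 ^ (j + 1))
      + ∑ j ∈ J \ T, Finsupp.single (j + 1) 1) = ∑ j ∈ J \ T, (2 ^ (j + 1) - 1) := by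
    rw [mwt_add, mwt_single, mwt_sum]
    simp [mwt_single, dB]
  rw [hdim, if_neg (key_arith J r hr hrpred (J \ T) (Finset.sdiff_subset)), zero_tmul]
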